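/- Suppose (a_n) are positive reals and there exist a regularly-varying-like envelope: A·φ_n ≤ a_n ≤ B·ψ_n for all n ≥ N, where n(φ_{n+1}/φ_n − 1) → α > −1 and n(ψ_{n+1}/ψ_n − 1) → β > −1 and A, B > 0. Then the partial sums satisfy A'·n·φ_n ≤ ∑_{k=1}^n a_k ≤ B'·n·ψ_n for all large n, for some constants A', B' > 0; i.e., liminf (∑_{k≤n} a_k)/(n φ_n) > 0 and limsup (∑_{k≤n} a_k)/(n ψ_n) < ∞. -/

import Mathlib

open Filter Topology

private lemma tele_aux (f : ℕ → ℝ) {m n : ℕ} (h : m ≤ n) :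
    ∑ k ∈ Finset.Ico m n, (f (k + 1) - f k) = f n - f m := by
  induction n, h using Nat.le_induction with
  | base => simp
  | succ n hn ih => rw [Finset.sum_Ico_succ_top (by omega), ih]; ring

private lemma ratio_tendsto (ψ : ℕ → ℝ) (hψpos : ∀ n, 0 < ψ n) (β : ℝ)
    (hψ : Tendsto (fun n : ℕ => (n : ℝ) * (ψ (n + 1) / ψ n - 1)) atTop (𝓝 β)) :
    Tendsto (fun n : ℕ => (((n : ℝ) + 1) * ψ (n + 1) - (n : ℝ) * ψ n) / ψ (n + 1))
      atTop (𝓝 (1 + β)) := by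
  set u : ℕ → ℝ := fun n => ψ (n + 1) / ψ n - 1 with hu
  have h2 : Tendsto u atTop (𝓝 0) := by
    have h := hψ.mul tendsto_one_div_atTop_nhds_zero_nat
    rw [mul_zero] at h
    refine h.congr' ?_
    filter_upwards [eventually_ge_atTop 1] with n hn
    have hn' : (n : ℝ) ≠ 0 := by positivity
    field_simp [hu]
    rfl
  have h3 : Tendsto (fun n : ℕ => (1 + (n : ℝ) * u n + u n) / (1 + u n)) atTop
      (𝓝 ((1 + β + 0) / (1 + 0))) :=
    Tendsto.div ((tendsto_const_nhds.add hψ).add h2) (tendsto_const_nhds.add h2) (by norm_num)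
  have heq : (fun n : ℕ => (1 + (n : ℝ) * u n + u n) / (1 + u n)) =
      fun n : ℕ => (((n : ℝ) + 1) * ψ (n + 1) - (n : ℝ) * ψ n) / ψ (n + 1) := by
    funext n
    have hn := (hψpos n).ne'
    have hn1 := (hψpos (n + 1)).ne'
    have hu' : u n = ψ (n + 1) / ψ n - 1 := rfl
    rw [hu', show (1 : ℝ) + (ψ (n + 1) / ψ n - 1) = ψ (n + 1) / ψ n by ring]
    field_simp
    ring
  rw [heq] at h3
  simpa using h3

theorem stmt_19 (a φ ψ : ℕ → ℝ) (hapos : ∀ n, 0 < a n)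
    (hφpos : ∀ n, 0 < φ n) (hψpos : ∀ n, 0 < ψ n) (α β : ℝ)
    (hα : -1 < α) (hβ : -1 < β)
    (hφ : Tendsto (fun n : ℕ => (n : ℝ) * (φ (n + 1) / φ n - 1)) atTop (𝓝 α))
    (hψ : Tendsto (fun n : ℕ => (n : ℝ) * (ψ (n + 1) / ψ n - 1)) atTop (𝓝 β))
    (henv : ∃ (A B : ℝ) (N : ℕ), 0 < A ∧ 0 < B ∧
      ∀ n ≥ N, A * φ n ≤ a n ∧ a n ≤ B * ψ n) :
    ∃ (A' B' : ℝ), 0 < A' ∧ 0 < B' ∧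
      ∀ᶠ n : ℕ in atTop,
        A' * (n : ℝ) * φ n ≤ ∑ k ∈ Finset.Icc 1 n, a k ∧
        ∑ k ∈ Finset.Icc 1 n, a k ≤ B' * (n : ℝ) * ψ n := by
  obtain ⟨A, B, N, hA, hB, hAB⟩ := henv
  have hc : (0 : ℝ) < (1 + β) / 2 := by linarith
  have hCpos : (0 : ℝ) < α + 2 := by linarith
  have hψ' := ratio_tendsto ψ hψpos β hψ
  have hφ' := ratio_tendsto φ hφpos α hφ
  have eψ : ∀ᶠ n : ℕ in atTop,
      (1 + β) / 2 * ψ (n + 1) ≤ ((n : ℝ) + 1) * ψ (n + 1) - (n : ℝ) * ψ n := by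
    filter_upwards [hψ'.eventually (eventually_ge_nhds (by linarith : (1 + β) / 2 < 1 + β))]
      with n hn
    exact (le_div_iff₀ (hψpos (n + 1))).mp hn
  have eφ : ∀ᶠ n : ℕ in atTop,
      ((n : ℝ) + 1) * φ (n + 1) - (n : ℝ) * φ n ≤ (α + 2) * φ (n + 1) := by
    filter_upwards [hφ'.eventually (eventually_le_nhds (by linarith : 1 + α < α + 2))]
      with n hn
    exact (div_le_iff₀ (hφpos (n + 1))).mp hn
  obtain ⟨M₀, hM₀⟩ := eventually_atTop.mp (eψ.and eφ)
  set M : ℕ := max M₀ (max N 1) with hMdef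
  have hM1 : 1 ≤ M := le_trans (le_max_right N 1) (le_max_right _ _)
  have hMN : N ≤ M := le_trans (le_max_left N 1) (le_max_right _ _)
  have hMk : ∀ k, M ≤ k →
      ((1 + β) / 2 * ψ (k + 1) ≤ ((k : ℝ) + 1) * ψ (k + 1) - (k : ℝ) * ψ k ∧
       ((k : ℝ) + 1) * φ (k + 1) - (k : ℝ) * φ k ≤ (α + 2) * φ (k + 1)) :=
    fun k hk => hM₀ k (le_trans (le_max_left _ _) hk)
  set SM : ℝ := ∑ k ∈ Finset.Ico 1 (M + 1), a k with hSM
  have hSMpos : 0 < SM := by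
    apply Finset.sum_pos (fun i _ => hapos i)
    exact ⟨1, Finset.mem_Ico.mpr ⟨le_refl 1, by omega⟩⟩
  have hfM : (0 : ℝ) < (M : ℝ) * ψ M := by
    have := hψpos M
    have : (0 : ℝ) < (M : ℝ) := by exact_mod_cast hM1
    positivity
  have hgM : (0 : ℝ) ≤ (M : ℝ) * φ M := mul_nonneg (Nat.cast_nonneg M) (hφpos M).le
  refine ⟨1 / ((M : ℝ) * φ M / a 1 + (α + 2) / A), SM / ((M : ℝ) * ψ M) + 2 * B / (1 + β),
    ?_, ?_, ?_⟩
  · apply one_div_pos.mpr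
    have h1 : (0 : ℝ) ≤ (M : ℝ) * φ M / a 1 := div_nonneg hgM (hapos 1).le
    have h2 : (0 : ℝ) < (α + 2) / A := div_pos hCpos hA
    linarith
  · have h1 : (0 : ℝ) < SM / ((M : ℝ) * ψ M) := div_pos hSMpos hfM
    have h2 : (0 : ℝ) < 2 * B / (1 + β) := div_pos (by linarith) (by linarith)
    linarith
  filter_upwards [eventually_ge_atTop M] with n hn
  -- telescoping sums
  have teleψ : ∑ k ∈ Finset.Ico M n, (((k : ℝ) + 1) * ψ (k + 1) - (k : ℝ) * ψ k)
      = (n : ℝ) * ψ n - (M : ℝ) * ψ M := by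
    have h := tele_aux (fun m : ℕ => (m : ℝ) * ψ m) hn
    simp only [Nat.cast_add, Nat.cast_one] at h
    exact h
  have teleφ : ∑ k ∈ Finset.Ico M n, (((k : ℝ) + 1) * φ (k + 1) - (k : ℝ) * φ k)
      = (n : ℝ) * φ n - (M : ℝ) * φ M := by
    have h := tele_aux (fun m : ℕ => (m : ℝ) * φ m) hn
    simp only [Nat.cast_add, Nat.cast_one] at h
    exact h
  have sumψ : (1 + β) / 2 * ∑ k ∈ Finset.Ico M n, ψ (k + 1)
      ≤ (n : ℝ) * ψ n - (M : ℝ) * ψ M := by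
    rw [← teleψ, Finset.mul_sum]
    apply Finset.sum_le_sum
    intro k hk
    exact (hMk k (Finset.mem_Ico.mp hk).1).1
  have sumφ : (n : ℝ) * φ n - (M : ℝ) * φ M
      ≤ (α + 2) * ∑ k ∈ Finset.Ico M n, φ (k + 1) := by
    rw [← teleφ, Finset.mul_sum]
    apply Finset.sum_le_sum
    intro k hk
    exact (hMk k (Finset.mem_Ico.mp hk).1).2
  -- reindex
  have ridxψ : ∑ k ∈ Finset.Ico M n, ψ (k + 1) = ∑ k ∈ Finset.Ico (M + 1) (n + 1), ψ k :=
    Finset.sum_Ico_add' ψ M n 1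
  have ridxφ : ∑ k ∈ Finset.Ico M n, φ (k + 1) = ∑ k ∈ Finset.Ico (M + 1) (n + 1), φ k :=
    Finset.sum_Ico_add' φ M n 1
  have ridxa : ∑ k ∈ Finset.Ico M n, a (k + 1) = ∑ k ∈ Finset.Ico (M + 1) (n + 1), a k :=
    Finset.sum_Ico_add' a M n 1
  -- splitting of the full sum
  have split : ∑ k ∈ Finset.Icc 1 n, a k
      = SM + ∑ k ∈ Finset.Ico (M + 1) (n + 1), a k := by
    rw [← Finset.Ico_add_one_right_eq_Icc, hSM]
    exact (Finset.sum_Ico_consecutive _ (by omega) (by omega)).symm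
  have hsumψnn : (0 : ℝ) ≤ ∑ k ∈ Finset.Ico M n, ψ (k + 1) :=
    Finset.sum_nonneg fun k _ => (hψpos _).le
  have hfmono : (M : ℝ) * ψ M ≤ (n : ℝ) * ψ n := by nlinarith
  constructor
  · -- lower bound
    have haφ : ∑ k ∈ Finset.Ico (M + 1) (n + 1), φ k
        ≤ (1 / A) * ∑ k ∈ Finset.Ico (M + 1) (n + 1), a k := by
      rw [Finset.mul_sum]
      apply Finset.sum_le_sum
      intro k hk
      have hkN : N ≤ k := by have := (Finset.mem_Ico.mp hk).1; omega
      have := (hAB k hkN).1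
      rw [one_div, inv_mul_eq_div, le_div_iff₀ hA, mul_comm]
      exact this
    have hsub : ∑ k ∈ Finset.Ico (M + 1) (n + 1), a k ≤ ∑ k ∈ Finset.Icc 1 n, a k := by
      rw [split]
      linarith [hSMpos]
    have ha1 : a 1 ≤ ∑ k ∈ Finset.Icc 1 n, a k := by
      apply Finset.single_le_sum (fun i _ => (hapos i).le)
      exact Finset.mem_Icc.mpr ⟨le_refl 1, by omega⟩
    set S : ℝ := ∑ k ∈ Finset.Icc 1 n, a k with hS
    have hSpos : 0 < S := lt_of_lt_of_le (hapos 1) ha1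
    have hKey : (n : ℝ) * φ n ≤ ((M : ℝ) * φ M / a 1 + (α + 2) / A) * S := by
      have h1 : (n : ℝ) * φ n ≤ (M : ℝ) * φ M + (α + 2) * ((1 / A) * S) := by
        have h2 : (α + 2) * ∑ k ∈ Finset.Ico M n, φ (k + 1)
            ≤ (α + 2) * ((1 / A) * S) := by
          apply mul_le_mul_of_nonneg_left _ hCpos.le
          rw [ridxφ]
          calc ∑ k ∈ Finset.Ico (M + 1) (n + 1), φ k
              ≤ (1 / A) * ∑ k ∈ Finset.Ico (M + 1) (n + 1), a k := haφ
            _ ≤ (1 / A) * S := by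
                apply mul_le_mul_of_nonneg_left hsub (by positivity)
        linarith
      have h3 : (M : ℝ) * φ M ≤ (M : ℝ) * φ M / a 1 * S := by
        rw [div_mul_eq_mul_div, le_div_iff₀ (hapos 1)]
        exact mul_le_mul_of_nonneg_left ha1 hgM
      have h4 : (α + 2) * ((1 / A) * S) = (α + 2) / A * S := by ring
      linarith [h1, h3]
    set K : ℝ := (M : ℝ) * φ M / a 1 + (α + 2) / A with hK
    have hKpos : 0 < K := by
      have h1 : (0 : ℝ) ≤ (M : ℝ) * φ M / a 1 := div_nonneg hgM (hapos 1).le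
      have h2 : (0 : ℝ) < (α + 2) / A := div_pos hCpos hA
      rw [hK]; linarith
    calc 1 / K * (n : ℝ) * φ n = (n : ℝ) * φ n * (1 / K) := by ring
      _ ≤ K * S * (1 / K) := mul_le_mul_of_nonneg_right hKey (by positivity)
      _ = S := by field_simp
  · -- upper bound
    have haψ : ∑ k ∈ Finset.Ico (M + 1) (n + 1), a k
        ≤ B * ∑ k ∈ Finset.Ico (M + 1) (n + 1), ψ k := by
      rw [Finset.mul_sum]
      apply Finset.sum_le_sum
      intro k hk
      have hkN : N ≤ k := by have := (Finset.mem_Ico.mp hk).1; omega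
      exact (hAB k hkN).2
    have h5 : ∑ k ∈ Finset.Ico (M + 1) (n + 1), ψ k
        ≤ 2 / (1 + β) * ((n : ℝ) * ψ n) := by
      rw [← ridxψ]
      rw [div_mul_eq_mul_div, le_div_iff₀ (by linarith : (0 : ℝ) < 1 + β)]
      nlinarith [sumψ, hfM]
    have h6 : SM ≤ SM / ((M : ℝ) * ψ M) * ((n : ℝ) * ψ n) := by
      rw [div_mul_eq_mul_div, le_div_iff₀ hfM]
      exact mul_le_mul_of_nonneg_left hfmono hSMpos.le
    rw [split]
    have h7 : B * ∑ k ∈ Finset.Ico (M + 1) (n + 1), ψ k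
        ≤ B * (2 / (1 + β) * ((n : ℝ) * ψ n)) :=
      mul_le_mul_of_nonneg_left h5 hB.le
    have : (SM / ((M : ℝ) * ψ M) + 2 * B / (1 + β)) * (n : ℝ) * ψ n
        = SM / ((M : ℝ) * ψ M) * ((n : ℝ) * ψ n) + B * (2 / (1 + β) * ((n : ℝ) * ψ n)) := by
      ring
    rw [this]
    linarith [haψ, h6, h7]
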